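/- arXiv:1211.0175 — 2 statements merged into one kernel-verified Lean document; each statement's English description precedes it below -/
import Mathlib

section
/- For the binary reflected Gray code and any index i with 0 <= i < d: the elements of RGC^d whose i-th bit equals 0, with that bit deleted, form exactly the sequence RGC^{d-1} in order; and for 0 <= i < d-1, the elements whose i-th bit equals 1, with that bit deleted, form exactly the sequence RGC^{d-1} with bit i complemented in each element, in order. -/
/-- The binary reflected Gray code word of a bit string `w` (most significant bit
first): bit `i` of the Gray code is the XOR of bits `i` and `i-1` of `w`, with the
convention that the bit at index `-1` is `0`. -/
def gray2 (w : List ℕ) : List ℕ :=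
  (List.range w.length).map
    (fun i => (w.getD i 0 + if i = 0 then 0 else w.getD (i - 1) 0) % 2)

/-- `mirror i w` complements (`x ↦ 1 - x`) the bit of `w` at index `i`. -/
def mirror (i : ℕ) (w : List ℕ) : List ℕ := w.set i (1 - w.getD i 0)

/-- The `d`-digit base-`b` representation of `n` (most significant digit first). -/
def digitsBE (b : ℕ) : ℕ → ℕ → List ℕ
  | 0, _ => []
  | d + 1, n => digitsBE b d (n / b) ++ [n % b]

/-- The binary reflected Gray code as a sequence of all `2^d` binary `d`-bit words. -/
def graySeq (d : ℕ) : List (List ℕ) :=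
  (List.range (2 ^ d)).map (fun r => gray2 (digitsBE 2 d r))

lemma gray2_le (w : List ℕ) {x : ℕ} (hx : x ∈ gray2 w) : x ≤ 1 := by
  simp only [gray2, List.mem_map, List.mem_range] at hx
  obtain ⟨i, -, rfl⟩ := hx
  omega

lemma gray2_cons (b : ℕ) (w : List ℕ) :
    gray2 (b :: w) = (b % 2) ::
      (List.range w.length).map
        (fun i => (w.getD i 0 + if i = 0 then b else w.getD (i - 1) 0) % 2) := by
  simp only [gray2, List.length_cons, List.range_succ_eq_map, List.map_cons, List.map_map]
  congr 1
  apply List.map_congr_left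
  intro i hi
  rcases i with _ | i <;> simp

lemma gray2_cons0 (w : List ℕ) : gray2 (0 :: w) = 0 :: gray2 w := by
  rw [gray2_cons]; rfl

lemma gray2_cons1 (w : List ℕ) : gray2 (1 :: w) = 1 :: mirror 0 (gray2 w) := by
  rw [gray2_cons]
  rcases w with _ | ⟨a, w⟩
  · simp [gray2, mirror]
  · congr 1
    simp only [gray2, mirror, List.length_cons, List.range_succ_eq_map, List.map_cons,
      List.map_map, List.getD_cons_zero, List.set_cons_zero, if_pos rfl, if_true]
    congr 1
    omega

lemma digitsBE_succ (d n : ℕ) :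
    digitsBE 2 (d + 1) n = (n / 2 ^ d % 2) :: digitsBE 2 d (n % 2 ^ d) := by
  induction d generalizing n with
  | zero => simp [digitsBE]
  | succ d ih =>
    show digitsBE 2 (d + 1) (n / 2) ++ [n % 2] = _
    rw [ih]
    show _ = _ :: (digitsBE 2 d (n % 2 ^ (d + 1) / 2) ++ [n % 2 ^ (d + 1) % 2])
    rw [List.cons_append]
    have h1 : n / 2 / 2 ^ d = n / 2 ^ (d + 1) := by
      rw [Nat.div_div_eq_div_mul, pow_succ']
    have h2 : n / 2 % 2 ^ d = n % 2 ^ (d + 1) / 2 := by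
      rw [pow_succ', Nat.mod_mul_right_div_self]
    have h3 : n % 2 = n % 2 ^ (d + 1) % 2 := by
      rw [Nat.mod_mod_of_dvd n ⟨2 ^ d, by rw [pow_succ']⟩]
    rw [h1, h2, h3]

lemma graySeq_succ' (d : ℕ) :
    graySeq (d + 1) = (graySeq d).map (fun w => 0 :: w)
      ++ ((graySeq d).map (mirror 0)).map (fun w => 1 :: w) := by
  unfold graySeq
  rw [show (2 : ℕ) ^ (d + 1) = 2 ^ d + 2 ^ d by rw [pow_succ]; omega, List.range_add]
  rw [List.map_append]
  simp only [List.map_map]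
  congr 1
  · apply List.map_congr_left
    intro r hr
    simp only [List.mem_range] at hr
    simp only [Function.comp_apply]
    rw [digitsBE_succ, Nat.div_eq_of_lt hr, Nat.mod_eq_of_lt hr]
    exact gray2_cons0 _
  · apply List.map_congr_left
    intro s hs
    simp only [List.mem_range] at hs
    simp only [Function.comp_apply]
    rw [digitsBE_succ]
    have h1 : (2 ^ d + s) / 2 ^ d % 2 = 1 := by
      rw [Nat.add_comm, Nat.add_div_right _ (Nat.two_pow_pos d),
        Nat.div_eq_of_lt hs]
    have h2 : (2 ^ d + s) % 2 ^ d = s := by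
      rw [Nat.add_mod_left, Nat.mod_eq_of_lt hs]
    rw [h1, h2]
    exact gray2_cons1 _

lemma mirror0_mirror0 (w : List ℕ) (h : ∀ x ∈ w, x ≤ 1) :
    mirror 0 (mirror 0 w) = w := by
  rcases w with _ | ⟨a, w⟩
  · simp [mirror]
  · have : a ≤ 1 := h a (by simp)
    simp only [mirror, List.getD_cons_zero, List.set_cons_zero]
    congr 1
    omega

lemma mem_graySeq_le {d : ℕ} {w : List ℕ} (hw : w ∈ graySeq d) : ∀ x ∈ w, x ≤ 1 := by
  simp only [graySeq, List.mem_map, List.mem_range] at hw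
  obtain ⟨r, -, rfl⟩ := hw
  exact fun x hx => gray2_le _ hx

lemma map_mirror0_mirror0 (d : ℕ) :
    ((graySeq d).map (mirror 0)).map (mirror 0) = graySeq d := by
  rw [List.map_map]
  conv_rhs => rw [← List.map_id (graySeq d)]
  apply List.map_congr_left
  intro w hw
  exact mirror0_mirror0 w (mem_graySeq_le hw)

lemma mirror_cons_zero (b : ℕ) (w : List ℕ) : mirror 0 (b :: w) = (1 - b) :: w := by
  simp [mirror]

lemma graySeq_reverse (d : ℕ) :
    (graySeq d).reverse = (graySeq d).map (mirror 0) := by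
  induction d with
  | zero => simp [graySeq, digitsBE, gray2, mirror]
  | succ d ih =>
    rw [graySeq_succ', List.reverse_append]
    simp only [List.map_append, ← List.map_reverse, ih, List.map_map]
    congr 1
    · apply List.map_congr_left
      intro w hw
      simp only [Function.comp_apply, mirror_cons_zero,
        mirror0_mirror0 w (mem_graySeq_le hw)]


lemma graySeq_succ (d : ℕ) :
    graySeq (d + 1) = (graySeq d).map (fun w => 0 :: w)
      ++ ((graySeq d).reverse).map (fun w => 1 :: w) := by
  rw [graySeq_succ', graySeq_reverse]

lemma cons_comp_eraseIdx (b j : ℕ) :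
    (fun w : List ℕ => w.eraseIdx (j + 1)) ∘ (fun w => b :: w)
      = (fun w => b :: w) ∘ (fun w : List ℕ => w.eraseIdx j) := by
  funext w; simp

lemma pred_comp_cons (b j v : ℕ) :
    (fun w : List ℕ => decide (w.getD (j + 1) 0 = v)) ∘ (fun w => b :: w)
      = (fun w : List ℕ => decide (w.getD j 0 = v)) := by
  funext w; simp [List.getD_cons_succ]

lemma mirror_cons_succ (j b : ℕ) (w : List ℕ) :
    mirror (j + 1) (b :: w) = b :: mirror j w := by
  simp [mirror]

lemma mirror_comp_cons (b j : ℕ) :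
    mirror (j + 1) ∘ (fun w : List ℕ => b :: w)
      = (fun w => b :: w) ∘ mirror j := by
  funext w
  simp only [Function.comp_apply]
  simp [mirror]

lemma key (d : ℕ) :
    (∀ i < d,
      ((graySeq d).filter (fun w => w.getD i 0 = 0)).map (fun w => w.eraseIdx i)
        = graySeq (d - 1)) ∧
    (∀ i < d - 1,
      ((graySeq d).filter (fun w => w.getD i 0 = 1)).map (fun w => w.eraseIdx i)
        = (graySeq (d - 1)).map (mirror i)) := by
  induction d with
  | zero => exact ⟨fun i hi => absurd hi (by omega), fun i hi => absurd hi (by omega)⟩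
  | succ d ih =>
    obtain ⟨ih0, ih1⟩ := ih
    constructor
    · intro i hi
      rw [graySeq_succ, List.filter_append, List.map_append, Nat.add_sub_cancel]
      rcases i with _ | j
      · rw [List.filter_map, List.filter_map]
        simp only [List.map_map, Function.comp_def, List.eraseIdx_cons_zero,
          List.map_id']
        simp
      · have hj : j < d := by omega
        obtain ⟨e, rfl⟩ : ∃ e, d = e + 1 := ⟨d - 1, by omega⟩
        rw [List.filter_map, List.filter_map, List.map_map, List.map_map,
          pred_comp_cons, pred_comp_cons, cons_comp_eraseIdx, cons_comp_eraseIdx,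
          List.filter_reverse, ← List.map_map, ← List.map_map,
          List.map_reverse, ih0 j hj, Nat.add_sub_cancel, graySeq_succ]
    · intro i hi
      rw [graySeq_succ, List.filter_append, List.map_append, Nat.add_sub_cancel]
      rcases i with _ | j
      · rw [List.filter_map, List.filter_map]
        simp only [List.map_map, Function.comp_def, List.eraseIdx_cons_zero,
          List.map_id']
        simp
        rw [graySeq_reverse]
      · have hj : j < d - 1 := by omega
        obtain ⟨e, rfl⟩ : ∃ e, d = e + 1 := ⟨d - 1, by omega⟩
        rw [List.filter_map, List.filter_map, List.map_map, List.map_map,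
          pred_comp_cons, pred_comp_cons, cons_comp_eraseIdx, cons_comp_eraseIdx,
          List.filter_reverse, ← List.map_map, ← List.map_map,
          List.map_reverse, ih1 j hj, Nat.add_sub_cancel, graySeq_succ,
          List.map_append]
        congr 1
        · simp only [List.map_map]
          apply List.map_congr_left
          intro w _
          simp only [Function.comp_apply]
          rw [mirror_cons_succ]
        · rw [List.map_map, mirror_comp_cons, ← List.map_map, List.map_reverse,
            ← List.map_reverse, ← List.map_reverse]

/-- For the binary reflected Gray code and any index `i < d`: the elements of `RGC^d`
whose `i`-th bit equals `0`, with that bit deleted, form exactly the sequence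
`RGC^{d-1}` in order; and for `i < d-1`, the elements whose `i`-th bit equals `1`,
with that bit deleted, form exactly the sequence `RGC^{d-1}` with bit `i`
complemented in each element, in order. -/
theorem binary_rgc_reduction (d : ℕ) (hd : 2 ≤ d) :
    (∀ i < d,
      ((graySeq d).filter (fun w => w.getD i 0 = 0)).map (fun w => w.eraseIdx i)
        = graySeq (d - 1)) ∧
    (∀ i < d - 1,
      ((graySeq d).filter (fun w => w.getD i 0 = 1)).map (fun w => w.eraseIdx i)
        = (graySeq (d - 1)).map (mirror i)) := key d
end

section
/- In the Meurthe curve permutation function, deleting a coordinate is compatible with the permutations: let r be a d-digit ternary number, i an index, and r' = take_i(r) the (d-1)-digit ternary number obtained by removing digit i. Then take_i(a(r)) = a'(r'), where a and a' denote the Meurthe permutations in dimensions d and d-1 respectively. -/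
/-- The value sequence of the inverse of the Meurthe permutation of a `(n+1)`-digit
ternary number `r`: it is obtained from the identity permutation `(0, 1, ..., n)` by
moving all indices `h` with `r h ∈ {0, 1}` to the front and reversing their order,
the indices `h` with `r h = 2` keeping their relative order at the back. -/
def meurtheInvList (n : ℕ) (r : Fin (n + 1) → Fin 3) : List (Fin (n + 1)) :=
  ((List.finRange (n + 1)).filter (fun h => r h ≠ 2)).reverse
    ++ (List.finRange (n + 1)).filter (fun h => r h = 2)

lemma meurthe_perm (n : ℕ) (r : Fin (n + 1) → Fin 3) :
    (meurtheInvList n r).Perm (List.finRange (n + 1)) := by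
  unfold meurtheInvList
  refine ((List.reverse_perm _).append_right _).trans ?_
  have := List.filter_append_perm (fun h => decide (r h ≠ 2)) (List.finRange (n + 1))
  refine List.Perm.trans ?_ this
  apply List.Perm.append_left
  apply List.Perm.of_eq
  apply List.filter_congr
  intro x _
  simp

lemma map_succAbove_finRange (n : ℕ) (i : Fin (n + 2)) :
    (List.finRange (n + 1)).map i.succAbove
      = (List.finRange (n + 2)).filter (fun x => x ≠ i) := by
  refine (fun hp h1 h2 => List.Perm.eq_of_pairwise (le := fun a b : Fin (n + 2) => a < b)
    (fun a _ _ _ h h' => absurd (h.trans h') (lt_irrefl a)) h1 h2 hp) ?_ ?_ ?_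
  · apply List.perm_of_nodup_nodup_toFinset_eq
    · exact (List.nodup_finRange _).map (Fin.strictMono_succAbove i).injective
    · exact (List.nodup_finRange _).filter _
    · ext x
      simp only [List.mem_toFinset, List.mem_map, List.mem_filter,
        List.mem_finRange, true_and, decide_eq_true_eq]
      constructor
      · rintro ⟨z, rfl⟩
        exact Fin.succAbove_ne i z
      · intro hx
        obtain ⟨z, hz⟩ := Fin.exists_succAbove_eq hx
        exact ⟨z, hz⟩
  · exact List.Pairwise.map _ (fun a b h => Fin.strictMono_succAbove i h)
      (List.pairwise_lt_finRange _)
  · exact (List.pairwise_lt_finRange _).filter _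

lemma map_succAbove_meurthe (n : ℕ) (r : Fin (n + 2) → Fin 3) (i : Fin (n + 2)) :
    (meurtheInvList n (fun t => r (i.succAbove t))).map i.succAbove
      = (meurtheInvList (n + 1) r).filter (fun x => x ≠ i) := by
  unfold meurtheInvList
  rw [List.map_append, List.map_reverse, List.filter_append]
  congr 1
  · rw [List.filter_reverse]
    congr 1
    rw [List.filter_comm, ← map_succAbove_finRange n i, List.filter_map]
    rfl
  · rw [List.filter_comm, ← map_succAbove_finRange n i, List.filter_map]
    rfl

/-- Deleting a coordinate is compatible with the Meurthe permutations.  Let `r` be a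
`d`-digit ternary number (`d = n + 2`), `i` an index, and `r' = take_i(r)` the
`(d-1)`-digit ternary number obtained by removing digit `i` (so
`r' j = r (i.succAbove j)`).  Let `a` and `a'` be the Meurthe permutations of `r` and
`r'` in dimensions `d` and `d - 1` (characterized by their inverses, as sequences
obtained from the identity by moving all indices `h` with `r_h ∈ {0,1}` to the front
and reversing their order).  Then `take_i(a(r)) = a'(r')`: deleting entry `a_i` from
the value sequence of `a` and decreasing by one every remaining entry exceeding `a_i`
yields exactly `a'`. -/
theorem meurthe_permutation_take_coordinate
    (n : ℕ) (r : Fin (n + 2) → Fin 3) (i : Fin (n + 2))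
    (a : Equiv.Perm (Fin (n + 2))) (a' : Equiv.Perm (Fin (n + 1)))
    (ha : ∀ j : Fin (n + 2),
      (meurtheInvList (n + 1) r)[(j : ℕ)]? = some (a.symm j))
    (ha' : ∀ j : Fin (n + 1),
      (meurtheInvList n (fun t => r (i.succAbove t)))[(j : ℕ)]? = some (a'.symm j)) :
    ∀ j : Fin (n + 1), (a' j : ℕ) =
      if (a (i.succAbove j) : ℕ) < (a i : ℕ)
      then (a (i.succAbove j) : ℕ)
      else (a (i.succAbove j) : ℕ) - 1 := by
  intro j
  set L := meurtheInvList (n + 1) r with hLdef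
  set L' := meurtheInvList n (fun t => r (i.succAbove t)) with hL'def
  have hnd : L.Nodup := (meurthe_perm _ r).nodup_iff.mpr (List.nodup_finRange _)
  set m := (a i : ℕ) with hm
  set k := (a (i.succAbove j) : ℕ) with hk
  set k' := (a' j : ℕ) with hk'
  -- L[m] = i, L[k] = i.succAbove j
  have hm' := ha (a i)
  rw [Equiv.symm_apply_apply] at hm'
  have hk1 := ha (a (i.succAbove j))
  rw [Equiv.symm_apply_apply] at hk1
  have hk'1 := ha' (a' j)
  rw [Equiv.symm_apply_apply] at hk'1
  obtain ⟨hmlt, hmget⟩ := List.getElem?_eq_some_iff.mp hm'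
  obtain ⟨hklt, hkget⟩ := List.getElem?_eq_some_iff.mp hk1
  obtain ⟨hk'lt, hk'get⟩ := List.getElem?_eq_some_iff.mp hk'1
  -- the map of L' is L with index m erased
  have herase : L'.map i.succAbove = L.eraseIdx m := by
    have h1 : L.eraseIdx m = L.erase i := by
      have : m = List.idxOf i L := by
        rw [← hmget]; exact (List.Nodup.idxOf_getElem hnd m hmlt).symm
      rw [this, ← List.erase_eq_eraseIdx_of_idxOf rfl]
    rw [h1, List.Nodup.erase_eq_filter hnd, map_succAbove_meurthe n r i]
    apply List.filter_congr
    intro x _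
    by_cases h : x = i <;> simp [h]
  have hmap0 : (L.eraseIdx m)[k']? = some (i.succAbove j) := by
    rw [← herase, List.getElem?_map, hk'1, Option.map_some]
  obtain ⟨hk'lt2, hmap⟩ := List.getElem?_eq_some_iff.mp hmap0
  rw [List.getElem_eraseIdx] at hmap
  by_cases hcase : k' < m
  · rw [dif_pos hcase] at hmap
    have : k' = k := hnd.getElem_inj_iff.mp (hmap.trans hkget.symm)
    rw [this] at hcase ⊢
    rw [if_pos hcase]
  · rw [dif_neg hcase] at hmap
    have : k' + 1 = k := hnd.getElem_inj_iff.mp (hmap.trans hkget.symm)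
    have hnk : ¬ k < m := by omega
    rw [if_neg hnk]
    omega
end
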